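/- Let M be an NFA over Σ with all states final, single initial state, accepting ε, such that the shortest word not in L(M) is w of length N. Form M' over Σ ∪ {#} by adding transitions on # from every final state of M to the initial state and making all states final. Then L(M') ≠ (Σ ∪ {#})*, yet every word over Σ ∪ {#} of length less than N is accepted by M'; in particular the shortest word not accepted by M' has length at least N. -/

import Mathlib

theorem shortest_rejected_word_construction {α σ : Type} (M : NFA α σ) (q₀ : σ)
    (hstart : M.start = {q₀}) (hacc : M.accept = Set.univ)
    (hnil : [] ∈ M.accepts)
    (w : List α) (hw : w ∉ M.accepts)
    (hmin : ∀ v : List α, v.length < w.length → v ∈ M.accepts)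
    (M' : NFA (Option α) σ)
    (hstep : ∀ q a, M'.step q (some a) = M.step q a)
    (hsharp : ∀ q, M'.step q none = {q₀})
    (hstart' : M'.start = {q₀}) (hacc' : M'.accept = Set.univ) :
    M'.accepts ≠ ⊤ ∧
      ∀ v : List (Option α), v.length < w.length → v ∈ M'.accepts := by
  have hstepSet : ∀ (S : Set σ) (a : α), M'.stepSet S (some a) = M.stepSet S a := by
    intro S a; simp [NFA.stepSet, hstep]
  have hstepNone : ∀ (S : Set σ), S.Nonempty → M'.stepSet S none = {q₀} := by
    rintro S ⟨q, hq⟩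
    ext r
    simp only [NFA.mem_stepSet, hsharp, Set.mem_singleton_iff]
    exact ⟨fun ⟨t, _, h⟩ => h, fun h => ⟨q, hq, h⟩⟩
  have hmap : ∀ (u : List α) (S : Set σ), M'.evalFrom S (u.map some) = M.evalFrom S u := by
    intro u
    induction u with
    | nil => intro S; rfl
    | cons a l ih =>
      intro S
      show M'.evalFrom (M'.stepSet S (some a)) (l.map some) = M.evalFrom (M.stepSet S a) l
      rw [hstepSet]; exact ih _
  have key : ∀ v : List (Option α), v.length < w.length →
      ∃ u : List α, u.length ≤ v.length ∧ M'.evalFrom {q₀} v = M.evalFrom {q₀} u := by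
    intro v
    induction v using List.reverseRecOn with
    | nil => exact fun _ => ⟨[], le_refl 0, rfl⟩
    | append_singleton x a ih =>
      intro hlen
      rw [List.length_append, List.length_singleton] at hlen
      have hx : x.length < w.length := by omega
      obtain ⟨u, hu, heq⟩ := ih hx
      cases a with
      | none =>
        have hne : (M'.evalFrom {q₀} x).Nonempty := by
          rw [heq]
          obtain ⟨q, _, hq⟩ := (M.mem_accepts).mp (hmin u (lt_of_le_of_lt hu hx))
          exact ⟨q, by rwa [hstart] at hq⟩
        refine ⟨[], Nat.zero_le _, ?_⟩
        rw [NFA.evalFrom_append, NFA.evalFrom_singleton, hstepNone _ hne]; rfl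
      | some a =>
        refine ⟨u ++ [a], by simp; omega, ?_⟩
        rw [NFA.evalFrom_append, NFA.evalFrom_singleton, NFA.evalFrom_append, NFA.evalFrom_singleton, heq, hstepSet]
  constructor
  · intro htop
    have hmem : (w.map some) ∈ M'.accepts := by rw [htop]; trivial
    obtain ⟨q, _, hq⟩ := (M'.mem_accepts).mp hmem
    rw [hstart', hmap] at hq
    exact hw ((M.mem_accepts).mpr ⟨q, by rw [hacc]; trivial, by rwa [hstart]⟩)
  · intro v hv
    obtain ⟨u, hu, heq⟩ := key v hv
    obtain ⟨q, _, hq⟩ := (M.mem_accepts).mp (hmin u (lt_of_le_of_lt hu hv))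
    exact (M'.mem_accepts).mpr ⟨q, by rw [hacc']; trivial, by rw [hstart', heq]; rwa [hstart] at hq⟩
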